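/- Let (Ω, μ) be a probability space, k ≥ 1, U_1, …, U_k finite sets, and for each i ∈ {1,…,k} and x ∈ U_i let E(i,x) be an event. Let C be a finite family of nonempty subsets of {1,…,k} and set Q = ⋃_{c ∈ C} ⋂_{i ∈ c} ⋃_{x ∈ U_i} E(i,x). For σ ⊆ {1,…,k} define N(σ) = (−1)^{|σ|+1} · ∑_{s ⊆ C, ⋃s = σ} (−1)^{|s|}. Then μ(Q) = ∑ N(sig(T̄)) · (−1)^{|T̄|} · μ(⋂_{i ∈ {1,…,k}} ⋂_{x ∈ T_i} E(i,x)), where the sum ranges over all k-tuples T̄ = (T_1, …, T_k) with T_i ⊆ U_i and at least one T_i nonempty, and an intersection over an empty index set is taken to be Ω. (This is the Expansion Theorem: the probability of a conjunctive query equals the expansion of any of its coverages.) -/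

import Mathlib

open Finset MeasureTheory


lemma sum_powerset_boole {ι : Type*} [DecidableEq ι] (S : Finset ι) (p : ι → Prop)
    [DecidablePred p] :
    ∑ s ∈ S.powerset, (-1:ℝ)^s.card * (if ∀ c ∈ s, p c then 1 else 0)
      = if ∀ c ∈ S, ¬ p c then 1 else 0 := by
  rw [← Finset.prod_boole (p := fun c => ¬ p c) (s := S)]
  have h1 : ∀ c ∈ S, (if ¬ p c then (1:ℝ) else 0) = (-1) * (if p c then 1 else 0) + 1 := by
    intro c _; by_cases h : p c <;> simp [h]
  rw [Finset.prod_congr rfl h1, Finset.prod_add]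
  refine Finset.sum_congr rfl fun t _ => ?_
  rw [Finset.prod_const_one, mul_one, Finset.prod_mul_distrib, Finset.prod_const,
    Finset.prod_boole]

lemma boole_exists {ι : Type*} [DecidableEq ι] (S : Finset ι) (p : ι → Prop)
    [DecidablePred p] :
    (if ∃ c ∈ S, p c then (1:ℝ) else 0)
      = ∑ s ∈ S.powerset.filter (fun s => s ≠ ∅),
          (-1:ℝ)^(s.card+1) * (if ∀ c ∈ s, p c then 1 else 0) := by
  have h := sum_powerset_boole S p
  rw [← Finset.sum_filter_add_sum_filter_not S.powerset (fun s => s = ∅)] at h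
  have h0 : S.powerset.filter (fun s => s = ∅) = {∅} := by
    ext t
    simp only [Finset.mem_filter, Finset.mem_powerset, Finset.mem_singleton,
      and_iff_right_iff_imp]
    rintro rfl; exact Finset.empty_subset S
  rw [h0, Finset.sum_singleton] at h
  simp only [Finset.card_empty, pow_zero, one_mul, Finset.notMem_empty, false_implies,
    implies_true, if_true] at h
  have h2 : (if ∃ c ∈ S, p c then (1:ℝ) else 0) = 1 - (if ∀ c ∈ S, ¬ p c then 1 else 0) := by
    by_cases hp : ∃ c ∈ S, p c
    · have h4 : ¬ ∀ c ∈ S, ¬ p c := by push_neg; exact hp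
      rw [if_pos hp, if_neg h4]; ring
    · have h4 : ∀ c ∈ S, ¬ p c := by push_neg at hp; exact hp
      rw [if_neg hp, if_pos h4]; ring
  rw [h2, ← h]
  have h3 : ∀ s ∈ S.powerset.filter (fun s => s ≠ ∅),
      (-1:ℝ)^(s.card+1) * (if ∀ c ∈ s, p c then 1 else 0)
      = -((-1:ℝ)^s.card * (if ∀ c ∈ s, p c then 1 else 0)) := by
    intro s _; rw [pow_succ]; ring
  rw [Finset.sum_congr rfl h3, Finset.sum_neg_distrib]
  ring

lemma expand_sigma {k : ℕ} {α : Type*} [DecidableEq α] (U : Fin k → Finset α)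
    (P : Fin k → α → Prop) [∀ i x, Decidable (P i x)] (σ : Finset (Fin k)) :
    (if ∀ i ∈ σ, ∃ x ∈ U i, P i x then (1:ℝ) else 0)
    = ∑ T ∈ Fintype.piFinset (fun i => (U i).powerset),
        (if (univ.filter fun i => (T i).Nonempty) = σ
          then (-1:ℝ)^(σ.card + ∑ i, (T i).card) else 0)
        * (if ∀ i, ∀ x ∈ T i, P i x then 1 else 0) := by
  classical
  set c : Fin k → Finset α → ℝ := fun i t =>
    if i ∈ σ then (if t = ∅ then 0 else (-1)^(t.card+1)) else (if t = ∅ then 1 else 0)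
    with hc
  have step1 : (if ∀ i ∈ σ, ∃ x ∈ U i, P i x then (1:ℝ) else 0)
      = ∏ i, ∑ t ∈ (U i).powerset, c i t * (if ∀ x ∈ t, P i x then 1 else 0) := by
    have hg : ∀ i : Fin k,
        (∑ t ∈ (U i).powerset, c i t * (if ∀ x ∈ t, P i x then 1 else 0))
        = if i ∈ σ then (if ∃ x ∈ U i, P i x then 1 else 0) else 1 := by
      intro i
      by_cases hi : i ∈ σ
      · rw [if_pos hi, boole_exists (U i) (P i)]
        rw [← Finset.sum_filter_add_sum_filter_not ((U i).powerset) (fun t => t ≠ ∅)]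
        have hzero : ∑ t ∈ ((U i).powerset.filter (fun t => ¬ t ≠ ∅)),
            c i t * (if ∀ x ∈ t, P i x then 1 else 0) = 0 := by
          refine Finset.sum_eq_zero fun t ht => ?_
          simp only [Finset.mem_filter, not_not] at ht
          rw [hc]; simp [ht.2, hi]
        rw [hzero, add_zero]
        refine Finset.sum_congr rfl fun t ht => ?_
        simp only [Finset.mem_filter] at ht
        rw [hc]; simp [hi, ht.2]
      · rw [if_neg hi]
        have : ∀ t ∈ (U i).powerset, c i t * (if ∀ x ∈ t, P i x then 1 else 0)
            = if t = ∅ then (if ∀ x ∈ t, P i x then (1:ℝ) else 0) else 0 := by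
          intro t _
          rw [hc]; by_cases ht : t = ∅ <;> simp [hi, ht]
        rw [Finset.sum_congr rfl this, Finset.sum_ite_eq' ((U i).powerset) ∅]
        rw [if_pos (Finset.empty_mem_powerset _)]
        simp
    rw [Finset.prod_congr rfl (fun i _ => hg i), Finset.prod_ite_mem, Finset.univ_inter,
      Finset.prod_boole]
    congr!
  rw [step1, Finset.prod_univ_sum]
  refine Finset.sum_congr rfl fun T hT => ?_
  rw [Finset.prod_mul_distrib, Finset.prod_boole]
  refine congrArg₂ (· * ·) ?_ (by simp)
  -- ∏ i, c i (T i) = if sig T = σ then ... else 0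
  by_cases hσ : (univ.filter fun i => (T i).Nonempty) = σ
  · rw [if_pos hσ]
    have hmem : ∀ i : Fin k, i ∈ σ ↔ (T i).Nonempty := by
      intro i
      rw [← hσ]; simp
    have hfac : ∀ i : Fin k, c i (T i) = if i ∈ σ then (-1:ℝ)^((T i).card+1) else 1 := by
      intro i
      by_cases hi : i ∈ σ
      · have : T i ≠ ∅ := Finset.nonempty_iff_ne_empty.mp ((hmem i).mp hi)
        rw [hc]; simp [hi, this]
      · have : T i = ∅ := by
          by_contra hne
          exact hi ((hmem i).mpr (Finset.nonempty_iff_ne_empty.mpr hne))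
        rw [hc]; simp [hi, this]
    rw [Finset.prod_congr rfl (fun i _ => hfac i), Finset.prod_ite_mem, Finset.univ_inter]
    have : ∀ i ∈ σ, (-1:ℝ)^((T i).card+1) = (-1)^(T i).card * (-1) := by
      intro i _; rw [pow_succ]
    rw [Finset.prod_congr rfl this, Finset.prod_mul_distrib, Finset.prod_const,
      Finset.prod_pow_eq_pow_sum]
    have hsum : ∑ i ∈ σ, (T i).card = ∑ i, (T i).card := by
      refine Finset.sum_subset (Finset.subset_univ σ) fun i _ hi => ?_
      have : T i = ∅ := by
        by_contra hne
        exact hi ((hmem i).mpr (Finset.nonempty_iff_ne_empty.mpr hne))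
      simp [this]
    rw [hsum, pow_add]
    ring
  · rw [if_neg hσ]
    have : ∃ i : Fin k, ¬ (i ∈ σ ↔ (T i).Nonempty) := by
      by_contra hall
      push_neg at hall
      apply hσ
      ext i; simp only [Finset.mem_filter, Finset.mem_univ, true_and]
      exact (hall i).symm
    obtain ⟨i, hi⟩ := this
    refine Finset.prod_eq_zero (Finset.mem_univ i) ?_
    by_cases him : i ∈ σ
    · have hTe : T i = ∅ := by
        by_contra hne
        exact hi ⟨fun _ => Finset.nonempty_iff_ne_empty.mpr hne, fun _ => him⟩
      rw [hc]; simp [him, hTe]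
    · have hne : T i ≠ ∅ := by
        intro he
        exact hi ⟨fun h => absurd h him,
          fun hn => absurd he (Finset.nonempty_iff_ne_empty.mp hn)⟩
      rw [hc]; simp [him, hne]

lemma pointwise_expansion {k : ℕ} {α : Type*} [DecidableEq α] (U : Fin k → Finset α)
    (P : Fin k → α → Prop) [∀ i x, Decidable (P i x)]
    (C : Finset (Finset (Fin k))) (hC : ∀ c ∈ C, c.Nonempty) :
    (if ∃ c ∈ C, ∀ i ∈ c, ∃ x ∈ U i, P i x then (1:ℝ) else 0)
    = ∑ T ∈ ((Fintype.piFinset fun i => (U i).powerset).filter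
        fun T => ∃ i, (T i).Nonempty),
        ((-1:ℝ) ^ ((univ.filter fun i => (T i).Nonempty).card + 1) *
          ∑ s ∈ C.powerset.filter
            (fun s => s.sup id = univ.filter fun i => (T i).Nonempty),
            (-1:ℝ) ^ s.card) *
        (-1:ℝ) ^ (∑ i, (T i).card) * (if ∀ i, ∀ x ∈ T i, P i x then 1 else 0) := by
  classical
  rw [boole_exists C (fun c => ∀ i ∈ c, ∃ x ∈ U i, P i x)]
  -- rewrite inner prop to sup form and expand
  have hstep : ∀ s : Finset (Finset (Fin k)),
      (if ∀ c ∈ s, ∀ i ∈ c, ∃ x ∈ U i, P i x then (1:ℝ) else 0)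
      = ∑ T ∈ Fintype.piFinset (fun i => (U i).powerset),
          (if (univ.filter fun i => (T i).Nonempty) = s.sup id
            then (-1:ℝ)^((s.sup id).card + ∑ i, (T i).card) else 0)
          * (if ∀ i, ∀ x ∈ T i, P i x then 1 else 0) := by
    intro s
    rw [← expand_sigma U P (s.sup id)]
    have hiff : (∀ c ∈ s, ∀ i ∈ c, ∃ x ∈ U i, P i x)
        ↔ (∀ i ∈ s.sup id, ∃ x ∈ U i, P i x) := by
      constructor
      · intro h i hi
        rw [Finset.mem_sup] at hi
        obtain ⟨c, hc, hic⟩ := hi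
        exact h c hc i hic
      · intro h c hc i hic
        exact h i (Finset.mem_sup.mpr ⟨c, hc, hic⟩)
    exact if_congr hiff rfl rfl
  trans (∑ s ∈ C.powerset.filter (fun s => s ≠ ∅), (-1:ℝ)^(s.card+1) *
      ∑ T ∈ Fintype.piFinset (fun i => (U i).powerset),
        (if (univ.filter fun i => (T i).Nonempty) = s.sup id
          then (-1:ℝ)^((s.sup id).card + ∑ i, (T i).card) else 0)
        * (if ∀ i, ∀ x ∈ T i, P i x then 1 else 0))
  · refine Finset.sum_congr rfl fun s _ => ?_
    rw [← hstep s]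
    congr!
  simp only [Finset.mul_sum]
  rw [Finset.sum_comm]
  -- extend RHS to full piFinset
  rw [Finset.sum_filter]
  refine Finset.sum_congr rfl fun T hT => ?_
  set σ := univ.filter (fun i => (T i).Nonempty) with hσ
  set b := (if ∀ i, ∀ x ∈ T i, P i x then (1:ℝ) else 0) with hbdef
  -- simplify each s-term to an ite on (s.sup id = σ)
  have hterm : ∀ s ∈ C.powerset.filter (fun s => s ≠ ∅),
      (-1:ℝ)^(s.card+1) *
        ((if σ = s.sup id then (-1:ℝ)^((s.sup id).card + ∑ i, (T i).card) else 0) * b)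
      = (if s.sup id = σ then
          (-1:ℝ)^(s.card+1) * (-1:ℝ)^(σ.card + ∑ i, (T i).card) * b else 0) := by
    intro s _
    by_cases h : σ = s.sup id
    · rw [if_pos h, if_pos h.symm, ← h]; ring
    · rw [if_neg h, if_neg (fun h2 => h h2.symm)]; ring
  rw [Finset.sum_congr rfl hterm, ← Finset.sum_filter, Finset.filter_filter]
  by_cases hex : ∃ i, (T i).Nonempty
  · rw [if_pos hex]
    have hσne : σ.Nonempty := by
      obtain ⟨i, hi⟩ := hex
      exact ⟨i, by rw [hσ]; simp [hi]⟩
    have hsets : C.powerset.filter (fun s => s ≠ ∅ ∧ s.sup id = σ)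
        = C.powerset.filter (fun s => s.sup id = σ) := by
      refine Finset.filter_congr fun s hs => ?_
      simp only [and_iff_right_iff_imp]
      intro hsup hse
      rw [hse] at hsup
      simp only [Finset.sup_empty, Finset.bot_eq_empty] at hsup
      exact Finset.not_nonempty_empty (hsup ▸ hσne)
    rw [hsets]
    simp only [Finset.mul_sum, Finset.sum_mul]
    refine Finset.sum_congr rfl fun s _ => ?_
    rw [pow_add, pow_add, pow_add]
    ring
  · rw [if_neg hex]
    refine Finset.sum_eq_zero fun s hs => ?_
    simp only [Finset.mem_filter, Finset.mem_powerset] at hs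
    obtain ⟨hsC, hsne, hsup⟩ := hs
    obtain ⟨c, hcs⟩ := Finset.nonempty_iff_ne_empty.mpr hsne
    obtain ⟨i, hic⟩ := hC c (hsC hcs)
    have : i ∈ s.sup id := Finset.mem_sup.mpr ⟨c, hcs, hic⟩
    rw [hsup, hσ] at this
    simp only [Finset.mem_filter, Finset.mem_univ, true_and] at this
    exact absurd ⟨i, this⟩ hex

/-- Expansion Theorem: Let `(Ω, μ)` be a probability space, `k ≥ 1`,
`U_1, …, U_k` finite sets, and `E(i,x)` an event for each `i` and `x ∈ U_i`. Let `C` be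
a finite family of nonempty subsets of `{1,…,k}` and
`Q = ⋃_{c ∈ C} ⋂_{i ∈ c} ⋃_{x ∈ U_i} E(i,x)`. With
`N(σ) = (−1)^{|σ|+1} · ∑_{s ⊆ C, ⋃s = σ} (−1)^{|s|}`, one has
`μ(Q) = ∑ N(sig(T̄)) · (−1)^{|T̄|} · μ(⋂_i ⋂_{x ∈ T_i} E(i,x))`, the sum ranging over
all tuples `T̄ = (T_1,…,T_k)` with `T_i ⊆ U_i` and at least one `T_i` nonempty, where
`sig(T̄) = {i : T_i ≠ ∅}` and `|T̄| = |T_1| + … + |T_k|` (an intersection over an empty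
index set is `Ω`). -/
theorem stmt_0 {Ω : Type*} [MeasurableSpace Ω] (μ : Measure Ω) [IsProbabilityMeasure μ]
    {α : Type*} [DecidableEq α] (k : ℕ) (hk : 1 ≤ k) (U : Fin k → Finset α)
    (E : Fin k → α → Set Ω) (hE : ∀ i x, MeasurableSet (E i x))
    (C : Finset (Finset (Fin k))) (hC : ∀ c ∈ C, c.Nonempty) :
    (μ (⋃ c ∈ C, ⋂ i ∈ c, ⋃ x ∈ U i, E i x)).toReal
    = ∑ T ∈ ((Fintype.piFinset fun i => (U i).powerset).filter
        fun T => ∃ i, (T i).Nonempty),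
        ((-1 : ℝ) ^ ((Finset.univ.filter fun i => (T i).Nonempty).card + 1) *
          ∑ s ∈ C.powerset.filter
            (fun s => s.sup id = Finset.univ.filter fun i => (T i).Nonempty),
            (-1 : ℝ) ^ s.card) *
        (-1 : ℝ) ^ (∑ i, (T i).card) * (μ (⋂ i, ⋂ x ∈ T i, E i x)).toReal := by
  classical
  have hQm : MeasurableSet (⋃ c ∈ C, ⋂ i ∈ c, ⋃ x ∈ U i, E i x) := by
    refine MeasurableSet.biUnion C.countable_toSet fun c _ => ?_
    refine MeasurableSet.biInter c.countable_toSet fun i _ => ?_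
    exact MeasurableSet.biUnion (U i).countable_toSet fun x _ => hE i x
  have hSm : ∀ T : Fin k → Finset α, MeasurableSet (⋂ i, ⋂ x ∈ T i, E i x) := fun T =>
    MeasurableSet.iInter fun i => MeasurableSet.biInter (T i).countable_toSet fun x _ => hE i x
  set g : (Fin k → Finset α) → ℝ := fun T =>
    ((-1 : ℝ) ^ ((Finset.univ.filter fun i => (T i).Nonempty).card + 1) *
          ∑ s ∈ C.powerset.filter
            (fun s => s.sup id = Finset.univ.filter fun i => (T i).Nonempty),
            (-1 : ℝ) ^ s.card) *
        (-1 : ℝ) ^ (∑ i, (T i).card) with hg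
  show _ = ∑ T ∈ ((Fintype.piFinset fun i => (U i).powerset).filter
      fun T => ∃ i, (T i).Nonempty), g T * (μ (⋂ i, ⋂ x ∈ T i, E i x)).toReal
  have hpt : ∀ ω : Ω, Set.indicator (⋃ c ∈ C, ⋂ i ∈ c, ⋃ x ∈ U i, E i x) (fun _ => (1:ℝ)) ω
      = ∑ T ∈ ((Fintype.piFinset fun i => (U i).powerset).filter
          fun T => ∃ i, (T i).Nonempty),
          Set.indicator (⋂ i, ⋂ x ∈ T i, E i x) (fun _ => g T) ω := by
    intro ω
    have h1 : Set.indicator (⋃ c ∈ C, ⋂ i ∈ c, ⋃ x ∈ U i, E i x) (fun _ => (1:ℝ)) ω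
        = (if ∃ c ∈ C, ∀ i ∈ c, ∃ x ∈ U i, ω ∈ E i x then (1:ℝ) else 0) := by
      rw [Set.indicator_apply]
      refine if_congr ?_ rfl rfl
      simp only [Set.mem_iUnion, Set.mem_iInter, exists_prop]
    rw [h1, pointwise_expansion U (fun i x => ω ∈ E i x) C hC]
    refine Finset.sum_congr rfl fun T _ => ?_
    rw [Set.indicator_apply, hg]
    by_cases h : ∀ i, ∀ x ∈ T i, ω ∈ E i x
    · rw [if_pos h, mul_one, if_pos (show ω ∈ ⋂ i, ⋂ x ∈ T i, E i x by
        simp only [Set.mem_iInter]; exact fun i x hx => h i x hx)]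
    · rw [if_neg h, mul_zero, if_neg (fun hmem => h (by
        simp only [Set.mem_iInter] at hmem; exact fun i x hx => hmem i x hx))]
  calc (μ (⋃ c ∈ C, ⋂ i ∈ c, ⋃ x ∈ U i, E i x)).toReal
      = ∫ ω, Set.indicator (⋃ c ∈ C, ⋂ i ∈ c, ⋃ x ∈ U i, E i x) (fun _ => (1:ℝ)) ω ∂μ := by
        rw [integral_indicator_const (1:ℝ) hQm, smul_eq_mul, mul_one, measureReal_def]
    _ = ∫ ω, ∑ T ∈ ((Fintype.piFinset fun i => (U i).powerset).filter
          fun T => ∃ i, (T i).Nonempty),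
          Set.indicator (⋂ i, ⋂ x ∈ T i, E i x) (fun _ => g T) ω ∂μ :=
        integral_congr_ae (Filter.Eventually.of_forall hpt)
    _ = ∑ T ∈ ((Fintype.piFinset fun i => (U i).powerset).filter
          fun T => ∃ i, (T i).Nonempty),
          ∫ ω, Set.indicator (⋂ i, ⋂ x ∈ T i, E i x) (fun _ => g T) ω ∂μ :=
        integral_finset_sum _ (fun T _ => (integrable_const (g T)).indicator (hSm T))
    _ = ∑ T ∈ ((Fintype.piFinset fun i => (U i).powerset).filter
          fun T => ∃ i, (T i).Nonempty), g T * (μ (⋂ i, ⋂ x ∈ T i, E i x)).toReal := by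
        refine Finset.sum_congr rfl fun T _ => ?_
        rw [integral_indicator_const (g T) (hSm T), smul_eq_mul, mul_comm, measureReal_def]
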